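/- Let a, a' be real numbers with |a| > 1 and |a'| > 1, and let σ², σ'² > 0. For λ, u, v ∈ ℝ define 2π·g_{a,σ²}(λ;u,v) = exp(−(σ²/2)(u² + v²)(a^{−2} + 1))·[exp(−σ²·u·v·(a^{−2} + 1)) − 1 + 2(exp(σ²·u·v·a^{−1}) − 1)·cos λ]. If g_{a,σ²}(λ;u,v) = g_{a',σ'²}(λ;u,v) for all λ, u, v ∈ ℝ, then a = a' and σ² = σ'². -/

import Mathlib

open Real

/-- The generalized spectrum of the Gaussian MA(1) model with coefficient `a`
(`|a| > 1`) and innovation variance `σ2`. -/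
noncomputable def gaussMA1Spec (a σ2 : ℝ) (lam u v : ℝ) : ℝ :=
  (1 / (2 * Real.pi)) *
    (Real.exp (-(σ2 / 2) * (u ^ 2 + v ^ 2) * (a ^ (-2 : ℤ) + 1)) *
      (Real.exp (-(σ2 * u * v * (a ^ (-2 : ℤ) + 1))) - 1
        + 2 * (Real.exp (σ2 * u * v * a⁻¹) - 1) * Real.cos lam))

lemma aux_exp (x : ℝ) : Real.exp (-x) * (Real.exp x - 1) = 1 - Real.exp (-x) := by
  have := Real.exp_add (-x) x
  simp at this
  nlinarith [this]

/-- Identifiability of the Gaussian MA(1) model from its generalized spectrum. -/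
theorem gaussMA1_identifiable (a a' σ2 σ2' : ℝ) (ha : 1 < |a|) (ha' : 1 < |a'|)
    (hσ : 0 < σ2) (hσ' : 0 < σ2')
    (h : ∀ lam u v : ℝ, gaussMA1Spec a σ2 lam u v = gaussMA1Spec a' σ2' lam u v) :
    a = a' ∧ σ2 = σ2' := by
  have hπ : (1 : ℝ) / (2 * Real.pi) ≠ 0 := by
    positivity
  -- abbreviations
  set A : ℝ := a ^ (-2 : ℤ) + 1 with hAdef
  set A' : ℝ := a' ^ (-2 : ℤ) + 1 with hA'def
  -- key1 : equation without the cosine term (λ = π/2)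
  have key1 : ∀ u v : ℝ,
      Real.exp (-(σ2 / 2) * (u ^ 2 + v ^ 2) * A) *
        (Real.exp (-(σ2 * u * v * A)) - 1)
      = Real.exp (-(σ2' / 2) * (u ^ 2 + v ^ 2) * A') *
        (Real.exp (-(σ2' * u * v * A')) - 1) := by
    intro u v
    have h1 := h (Real.pi / 2) u v
    unfold gaussMA1Spec at h1
    rw [Real.cos_pi_div_two] at h1
    have h2 := mul_left_cancel₀ hπ h1
    simpa [hAdef, hA'def] using h2
  -- key2 : equation of the cosine coefficients (λ = 0 minus key1)
  have key2 : ∀ u v : ℝ,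
      Real.exp (-(σ2 / 2) * (u ^ 2 + v ^ 2) * A) *
        (Real.exp (σ2 * u * v * a⁻¹) - 1)
      = Real.exp (-(σ2' / 2) * (u ^ 2 + v ^ 2) * A') *
        (Real.exp (σ2' * u * v * a'⁻¹) - 1) := by
    intro u v
    have h1 := h 0 u v
    unfold gaussMA1Spec at h1
    rw [Real.cos_zero] at h1
    have h2 := mul_left_cancel₀ hπ h1
    have h3 := key1 u v
    linarith [h2, h3]
  -- Step 3 : σ2 * A = σ2' * A'
  have e3 := key1 1 (-1)
  have e3' : Real.exp (-(σ2 * A)) * (Real.exp (σ2 * A) - 1)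
      = Real.exp (-(σ2' * A')) * (Real.exp (σ2' * A') - 1) := by
    have l1 : -(σ2 / 2) * ((1:ℝ) ^ 2 + (-1:ℝ) ^ 2) * A = -(σ2 * A) := by ring
    have l2 : -(σ2 * 1 * (-1) * A) = σ2 * A := by ring
    have l3 : -(σ2' / 2) * ((1:ℝ) ^ 2 + (-1:ℝ) ^ 2) * A' = -(σ2' * A') := by ring
    have l4 : -(σ2' * 1 * (-1) * A') = σ2' * A' := by ring
    rw [l1, l2, l3, l4] at e3
    exact e3
  rw [aux_exp, aux_exp] at e3'
  have hexpA : Real.exp (-(σ2 * A)) = Real.exp (-(σ2' * A')) := by linarith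
  have hA : σ2 * A = σ2' * A' := by
    have := Real.exp_injective hexpA
    linarith
  -- Step 4 : σ2 * a⁻¹ = σ2' * a'⁻¹
  have e4 := key2 1 1
  have hBeq : σ2 * a⁻¹ = σ2' * a'⁻¹ := by
    have l1 : -(σ2 / 2) * ((1:ℝ) ^ 2 + (1:ℝ) ^ 2) * A = -(σ2 * A) := by ring
    have l3 : -(σ2' / 2) * ((1:ℝ) ^ 2 + (1:ℝ) ^ 2) * A' = -(σ2' * A') := by ring
    rw [l1, l3, hA] at e4
    have hpos : Real.exp (-(σ2' * A')) ≠ 0 := (Real.exp_pos _).ne'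
    have h5 := mul_left_cancel₀ hpos e4
    have h6 : Real.exp (σ2 * 1 * 1 * a⁻¹) = Real.exp (σ2' * 1 * 1 * a'⁻¹) := by linarith
    have := Real.exp_injective h6
    linarith
  -- Step 5 : algebra
  set b : ℝ := a⁻¹ with hbdef
  set b' : ℝ := a'⁻¹ with hb'def
  have hb1 : |b| < 1 := by
    rw [hbdef, abs_inv]
    exact inv_lt_one_of_one_lt₀ ha
  have hb'1 : |b'| < 1 := by
    rw [hb'def, abs_inv]
    exact inv_lt_one_of_one_lt₀ ha'
  have hbne : b ≠ 0 := by
    rw [hbdef]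
    exact inv_ne_zero (fun h0 => by rw [h0] at ha; norm_num at ha)
  have hb'ne : b' ≠ 0 := by
    rw [hb'def]
    exact inv_ne_zero (fun h0 => by rw [h0] at ha'; norm_num at ha')
  have hA2 : σ2 * (b ^ 2 + 1) = σ2' * (b' ^ 2 + 1) := by
    have e1 : A = b ^ 2 + 1 := by
      rw [hAdef, hbdef]
      norm_num [zpow_neg, inv_pow]
    have e2 : A' = b' ^ 2 + 1 := by
      rw [hA'def, hb'def]
      norm_num [zpow_neg, inv_pow]
    rw [e1, e2] at hA
    exact hA
  have key : σ2 * ((b - b') * (b * b' - 1)) = 0 := by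
    linear_combination b' * hA2 - (b' ^ 2 + 1) * hBeq
  have hbb' : b * b' - 1 ≠ 0 := by
    have : |b * b'| < 1 := by
      rw [abs_mul]
      calc |b| * |b'| < 1 * 1 := by
            apply mul_lt_mul' (le_of_lt hb1) hb'1 (abs_nonneg _) one_pos
        _ = 1 := by ring
    intro hc
    have h1 : b * b' = 1 := by linarith
    rw [h1] at this
    norm_num at this
  have hbeq : b = b' := by
    rcases mul_eq_zero.mp key with h1 | h1
    · exact absurd h1 hσ.ne'
    · rcases mul_eq_zero.mp h1 with h2 | h2
      · linarith
      · exact absurd h2 hbb'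
  have hσeq : σ2 = σ2' := by
    rw [hbeq] at hBeq
    exact mul_right_cancel₀ hb'ne hBeq
  have haeq : a = a' := by
    have : b⁻¹ = b'⁻¹ := by rw [hbeq]
    rwa [hbdef, hb'def, inv_inv, inv_inv] at this
  exact ⟨haeq, hσeq⟩
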